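/- Let (K,v) be a valued field of characteristic p > 0 with M_v ⊆ {x^p - x : x ∈ K}, and let L = K(a) with a^p - a = b ∉ ℘(K) be an immediate Galois extension of degree p with extension ṽ of v. If {a_ρ}_{ρ<κ} is the pseudo-convergent sequence constructed from a cofinal sequence in C = {v(x^p - x - b) : x ∈ K}, then every polynomial P_0 ∈ K[X] for which v(P_0(a_ρ)) is ultimately strictly increasing has degree at least p. -/

import Mathlib

open Polynomial

section Aux

variable {Γ : Type} [LinearOrderedCommGroupWithZero Γ]

private lemma pow_left_inj₀' {x y : Γ} {k : ℕ} (hk : k ≠ 0) (h : x ^ k = y ^ k) : x = y := by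
  rcases lt_trichotomy x y with hlt | he | hgt
  · exact absurd h (pow_lt_pow_left₀ hlt zero_le' hk).ne
  · exact he
  · exact absurd h.symm (pow_lt_pow_left₀ hgt zero_le' hk).ne

variable {K : Type} [Field K] (v : Valuation K Γ)

private lemma val_add_of_lt {x y : K} (h : v y < v x) : v (x + y) = v x := by
  rw [v.map_add_of_distinct_val h.ne', max_eq_left h.le]

private lemma val_sub_of_lt {x y : K} (h : v y < v x) : v (x - y) = v x := by
  rw [sub_eq_add_neg]
  exact val_add_of_lt v (by rwa [Valuation.map_neg])

private lemma val_sum_dom {α : Type*} (s : Finset α) (f : α → K) {i₀ : α} (hi₀ : i₀ ∈ s)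
    (hlt : ∀ j ∈ s, j ≠ i₀ → v (f j) < v (f i₀)) :
    v (∑ j ∈ s, f j) = v (f i₀) := by
  classical
  rw [← Finset.add_sum_erase s f hi₀]
  rcases (s.erase i₀).eq_empty_or_nonempty with he | hne
  · rw [he, Finset.sum_empty, add_zero]
  · obtain ⟨j, hj⟩ := hne
    have hj' := hlt j (Finset.mem_of_mem_erase hj) (Finset.ne_of_mem_erase hj)
    have h0 : v (f i₀) ≠ 0 := fun h =>
      (not_lt_of_ge (zero_le' (a := v (f j)))) (h ▸ hj')
    have hrest := v.map_sum_lt h0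
      (fun j hj => hlt j (Finset.mem_of_mem_erase hj) (Finset.ne_of_mem_erase hj))
    exact val_add_of_lt v hrest

private lemma tails {ι : Type} [LinearOrder ι] [Nonempty ι] {α : Type*} (s : Finset α)
    (P : α → ι → Prop) (h : ∀ a ∈ s, ∃ ρ₀, ∀ ρ, ρ₀ ≤ ρ → P a ρ) :
    ∃ ρ₀, ∀ ρ, ρ₀ ≤ ρ → ∀ a ∈ s, P a ρ := by
  classical
  induction s using Finset.induction_on with
  | empty => exact ⟨Classical.arbitrary ι, fun _ _ a ha => absurd ha (Finset.notMem_empty a)⟩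
  | @insert a s ha ih =>
    obtain ⟨ρ₁, hρ₁⟩ := h a (Finset.mem_insert_self a s)
    obtain ⟨ρ₂, hρ₂⟩ := ih (fun b hb => h b (Finset.mem_insert_of_mem hb))
    refine ⟨max ρ₁ ρ₂, fun ρ hρ b hb => ?_⟩
    rcases Finset.mem_insert.mp hb with rfl | hb
    · exact hρ₁ ρ (le_trans (le_max_left _ _) hρ)
    · exact hρ₂ ρ (le_trans (le_max_right _ _) hρ) b hb

end Aux

theorem min_degree_of_increasing_valuations
    (p : ℕ) (hp : p.Prime) (K L : Type) [Field K] [Field L] [Algebra K L]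
    [CharP K p] [FiniteDimensional K L] [IsGalois K L]
    (hdeg : Module.finrank K L = p)
    {Γ : Type} [LinearOrderedCommGroupWithZero Γ]
    (v : Valuation K Γ) (w : Valuation L Γ)
    (hext : ∀ x : K, w (algebraMap K L x) = v x)
    (himmval : ∀ y : L, y ≠ 0 → ∃ x : K, w y = v x)
    (himmres : ∀ y : L, w y ≤ 1 → ∃ x : K, v x ≤ 1 ∧ w (y - algebraMap K L x) < 1)
    (hM : ∀ m : K, v m < 1 → ∃ x : K, x ^ p - x = m)
    (a : L) (b : K) (hgen : Algebra.adjoin K {a} = ⊤)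
    (hab : a ^ p - a = algebraMap K L b) (hb : ∀ x : K, x ^ p - x ≠ b)
    {ι : Type} [LinearOrder ι] [Nonempty ι] [NoMaxOrder ι] (aseq : ι → K)
    (hmono : StrictAnti (fun ρ => v (aseq ρ ^ p - aseq ρ - b)))
    (hcof : ∀ x : K, ∃ ρ, v (aseq ρ ^ p - aseq ρ - b) ≤ v (x ^ p - x - b)) :
    ∀ P₀ : K[X],
      (∃ ρ₀, ∀ ρ σ, ρ₀ ≤ ρ → ρ < σ →
        v (P₀.eval (aseq σ)) < v (P₀.eval (aseq ρ))) →
      p ≤ P₀.natDegree := by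
  classical
  haveI : Fact p.Prime := ⟨hp⟩
  intro P₀ hinc
  by_contra hcon
  push_neg at hcon
  obtain ⟨ρ₀, hρ₀⟩ := hinc
  have hP₀ne : P₀ ≠ 0 := by
    intro h0
    obtain ⟨σ, hσ⟩ := exists_gt ρ₀
    have h1 := hρ₀ ρ₀ σ le_rfl hσ
    rw [h0] at h1
    simp at h1
  -- the δ function
  set δ : ι → Γ := fun ρ => v (aseq ρ ^ p - aseq ρ - b) with hδdef
  have hδ_eval : ∀ ρ, v (aseq ρ ^ p - aseq ρ - b) = δ ρ := fun _ => rfl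
  have hδanti : StrictAnti δ := hmono
  -- δ is everywhere > 1
  have hδnotlt : ∀ ρ, ¬ δ ρ < 1 := by
    intro ρ hlt
    obtain ⟨x, hx⟩ := hM _ hlt
    exact hb (aseq ρ - x) (by rw [sub_pow_char]; linear_combination -hx)
  have hδ1 : ∀ ρ, 1 < δ ρ := fun ρ => by
    obtain ⟨σ, hσ⟩ := exists_gt ρ
    exact lt_of_le_of_lt (not_lt.mp (hδnotlt σ)) (hδanti hσ)
  -- the key computation for differences
  have hkey : ∀ ρ σ, ρ < σ →
      1 < v (aseq σ - aseq ρ) ∧ (v (aseq σ - aseq ρ)) ^ p = δ ρ := by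
    intro ρ σ hρσ
    have hδσρ : δ σ < δ ρ := hδanti hρσ
    have hdiff : (aseq σ - aseq ρ) ^ p - (aseq σ - aseq ρ)
        = (aseq σ ^ p - aseq σ - b) - (aseq ρ ^ p - aseq ρ - b) := by
      rw [sub_pow_char]; ring
    have hvd : v ((aseq σ - aseq ρ) ^ p - (aseq σ - aseq ρ)) = δ ρ := by
      rw [hdiff, Valuation.map_sub_swap]
      exact val_sub_of_lt v hδσρ
    have hu1 : 1 < v (aseq σ - aseq ρ) := by
      by_contra h
      push_neg at h
      have hle : v ((aseq σ - aseq ρ) ^ p - (aseq σ - aseq ρ)) ≤ 1 := by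
        refine le_trans (v.map_sub _ _) (max_le ?_ h)
        rw [v.map_pow]
        exact pow_le_one₀ zero_le' h
      rw [hvd] at hle
      exact absurd hle (not_le.mpr (hδ1 ρ))
    have hup : v (aseq σ - aseq ρ) < v ((aseq σ - aseq ρ) ^ p) := by
      rw [v.map_pow]
      calc v (aseq σ - aseq ρ) = (v (aseq σ - aseq ρ)) ^ 1 := (pow_one _).symm
        _ < _ := pow_lt_pow_right₀ hu1 hp.one_lt
    refine ⟨hu1, ?_⟩
    rw [← v.map_pow, ← val_sub_of_lt v hup]
    exact hvd
  -- the γ function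
  set γ : ι → Γ := fun ρ => v (aseq (exists_gt ρ).choose - aseq ρ) with hγdef
  have hγp : ∀ ρ, (γ ρ) ^ p = δ ρ := fun ρ => (hkey ρ _ (exists_gt ρ).choose_spec).2
  have hγ1 : ∀ ρ, 1 < γ ρ := fun ρ => (hkey ρ _ (exists_gt ρ).choose_spec).1
  have hγ0 : ∀ ρ, γ ρ ≠ 0 := fun ρ => ne_of_gt (lt_trans zero_lt_one (hγ1 ρ))
  have hγeq : ∀ ρ σ, ρ < σ → v (aseq σ - aseq ρ) = γ ρ := by
    intro ρ σ hρσ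
    exact pow_left_inj₀' hp.ne_zero (((hkey ρ σ hρσ).2).trans (hγp ρ).symm)
  have hγanti : StrictAnti γ := by
    intro ρ σ hρσ
    have h1 : (γ σ) ^ p < (γ ρ) ^ p := by rw [hγp, hγp]; exact hδanti hρσ
    exact lt_of_pow_lt_pow_left₀ p zero_le' h1
  -- MAIN: every nonzero polynomial of degree < p has eventually constant values
  have MAIN : ∀ n : ℕ, n < p → ∀ T : K[X], T ≠ 0 → T.natDegree ≤ n →
      ∃ κ : Γ, κ ≠ 0 ∧ ∃ ρ₁ : ι, ∀ ρ, ρ₁ ≤ ρ → v (T.eval (aseq ρ)) = κ := by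
    intro n
    induction n using Nat.strong_induction_on with
    | _ n IH =>
      intro hn T hT hdegT
      rcases lt_or_eq_of_le hdegT with hlt | hdeg
      · exact IH T.natDegree hlt (lt_trans hlt hn) T hT le_rfl
      rcases Nat.eq_zero_or_pos n with rfl | hn1
      · refine ⟨v (T.coeff 0), ?_, Classical.arbitrary ι, fun ρ _ => ?_⟩
        · rw [v.ne_zero_iff]
          intro h0
          apply hT
          rw [eq_C_of_natDegree_eq_zero hdeg, h0, map_zero]
        · conv_lhs => rw [eq_C_of_natDegree_eq_zero hdeg]
          rw [eval_C]
      -- n ≥ 1, T.natDegree = n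
      -- Step A: eventual constants for the Hasse derivatives
      have hder : ∀ i : ℕ, ∃ (κ : Γ) (r : ι), 1 ≤ i → hasseDeriv i T ≠ 0 →
          (κ ≠ 0 ∧ ∀ ρ, r ≤ ρ → v ((hasseDeriv i T).eval (aseq ρ)) = κ) := by
        intro i
        by_cases hi : 1 ≤ i ∧ hasseDeriv i T ≠ 0
        · obtain ⟨h1, h3⟩ := hi
          have h4 := natDegree_hasseDeriv_le T i
          rw [hdeg] at h4
          have hdlt : (hasseDeriv i T).natDegree < n := by omega
          obtain ⟨κ, hκ0, ρ₁, h⟩ := IH (hasseDeriv i T).natDegree hdlt (lt_trans hdlt hn) _ h3 le_rfl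
          exact ⟨κ, ρ₁, fun _ _ => ⟨hκ0, h⟩⟩
        · exact ⟨1, Classical.arbitrary ι, fun h1 h3 => absurd ⟨h1, h3⟩ hi⟩
      choose c r hcr using hder
      obtain ⟨ρA, hρA⟩ := tails (Finset.range (n+1)) (fun i ρ => r i ≤ ρ)
        (fun i _ => ⟨r i, fun ρ h => h⟩)
      set S : Finset ℕ := (Finset.range (n+1)).filter (fun i => 1 ≤ i ∧ hasseDeriv i T ≠ 0)
        with hSdef
      have hmemS : ∀ i ∈ S, 1 ≤ i ∧ i ≤ n ∧ hasseDeriv i T ≠ 0 := by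
        intro i hi
        rw [hSdef, Finset.mem_filter, Finset.mem_range] at hi
        exact ⟨hi.2.1, by omega, hi.2.2⟩
      have hcS : ∀ i ∈ S, c i ≠ 0 ∧ ∀ ρ, ρA ≤ ρ → v ((hasseDeriv i T).eval (aseq ρ)) = c i := by
        intro i hi
        obtain ⟨h1, h2, h3⟩ := hmemS i hi
        obtain ⟨hκ, h⟩ := hcr i h1 h3
        exact ⟨hκ, fun ρ hρ => h ρ (hρA ρ hρ i (Finset.mem_range.mpr (by omega)))⟩
      -- the top Hasse derivative is nonzero
      have hTn : T.coeff n ≠ 0 := by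
        have h1 := leadingCoeff_ne_zero.mpr hT
        rwa [Polynomial.leadingCoeff, hdeg] at h1
      have hHn : hasseDeriv n T ≠ 0 := by
        intro h0
        have hc0 : (hasseDeriv n T).coeff 0 = T.coeff n := by
          rw [hasseDeriv_coeff]
          simp
        rw [h0, coeff_zero] at hc0
        exact hTn hc0.symm
      have hSn : n ∈ S := by
        rw [hSdef, Finset.mem_filter, Finset.mem_range]
        exact ⟨by omega, hn1, hHn⟩
      -- pairwise eventual dominance
      have pair : ∀ i j : ℕ, i < j → ∀ ci cj : Γ, ci ≠ 0 → cj ≠ 0 →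
          ∃ ρ₁, (∀ ρ, ρ₁ ≤ ρ → cj * γ ρ ^ j < ci * γ ρ ^ i) ∨
                 (∀ ρ, ρ₁ ≤ ρ → ci * γ ρ ^ i < cj * γ ρ ^ j) := by
        intro i j hij ci cj hci hcj
        have hsplit : ∀ ρ' : ι, γ ρ' ^ j = γ ρ' ^ (j - i) * γ ρ' ^ i := by
          intro ρ'
          rw [← pow_add]
          congr 1
          omega
        by_cases hex : ∃ ρh, cj * γ ρh ^ j ≤ ci * γ ρh ^ i
        · obtain ⟨ρh, hρh⟩ := hex
          obtain ⟨ρ₁, hρ₁⟩ := exists_gt ρh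
          refine ⟨ρ₁, Or.inl fun ρ hρ => ?_⟩
          have hρh' : ρh < ρ := lt_of_lt_of_le hρ₁ hρ
          have h1 : cj * γ ρh ^ (j - i) ≤ ci := by
            rw [hsplit, ← mul_assoc] at hρh
            exact le_of_mul_le_mul_right hρh (zero_lt_iff.mpr (pow_ne_zero _ (hγ0 ρh)))
          have h3 : cj * γ ρ ^ (j - i) < ci := by
            refine lt_of_lt_of_le ?_ h1
            exact mul_lt_mul_of_pos_left
              (pow_lt_pow_left₀ (hγanti hρh') zero_le' (by omega)) (zero_lt_iff.mpr hcj)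
          calc cj * γ ρ ^ j = (cj * γ ρ ^ (j - i)) * γ ρ ^ i := by rw [hsplit, mul_assoc]
            _ < ci * γ ρ ^ i :=
              mul_lt_mul_of_pos_right h3 (zero_lt_iff.mpr (pow_ne_zero _ (hγ0 ρ)))
        · push_neg at hex
          exact ⟨Classical.arbitrary ι, Or.inr fun ρ _ => hex ρ⟩
      have pairs' : ∀ ij : ℕ × ℕ, ∃ ρ₁ : ι, ij.1 ∈ S → ij.2 ∈ S → ij.1 < ij.2 →
          ((∀ ρ, ρ₁ ≤ ρ → c ij.2 * γ ρ ^ ij.2 < c ij.1 * γ ρ ^ ij.1) ∨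
           (∀ ρ, ρ₁ ≤ ρ → c ij.1 * γ ρ ^ ij.1 < c ij.2 * γ ρ ^ ij.2)) := by
        intro ij
        by_cases hij : ij.1 ∈ S ∧ ij.2 ∈ S ∧ ij.1 < ij.2
        · obtain ⟨h1, h2, h3⟩ := hij
          obtain ⟨ρ₁, h⟩ := pair ij.1 ij.2 h3 (c ij.1) (c ij.2) (hcS _ h1).1 (hcS _ h2).1
          exact ⟨ρ₁, fun _ _ _ => h⟩
        · exact ⟨Classical.arbitrary ι, fun h1 h2 h3 => absurd ⟨h1, h2, h3⟩ hij⟩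
      choose pr hpr using pairs'
      obtain ⟨ρB, hρB⟩ := tails (S ×ˢ S) (fun ij ρ => pr ij ≤ ρ)
        (fun ij _ => ⟨pr ij, fun ρ h => h⟩)
      set ρC : ι := max ρA ρB with hρCdef
      have hρCA : ρA ≤ ρC := le_max_left _ _
      have hρCB : ρB ≤ ρC := le_max_right _ _
      -- the dominant index
      obtain ⟨i₀, hi₀S, hi₀max⟩ := Finset.exists_max_image S (fun i => c i * γ ρC ^ i) ⟨n, hSn⟩
      have hprle : ∀ i j, i ∈ S → j ∈ S → pr (i, j) ≤ ρC :=
        fun i j hi hj => le_trans (hρB ρC hρCB (i, j) (Finset.mem_product.mpr ⟨hi, hj⟩)) le_rfl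
      have hdom : ∀ ρ, ρC ≤ ρ → ∀ j ∈ S, j ≠ i₀ → c j * γ ρ ^ j < c i₀ * γ ρ ^ i₀ := by
        intro ρ hρ j hjS hji
        rcases lt_or_gt_of_ne hji with hlt | hgt
        · rcases hpr (j, i₀) hjS hi₀S hlt with h | h
          · exact absurd (hi₀max j hjS)
              (not_le.mpr (h ρC (hprle j i₀ hjS hi₀S)))
          · exact h ρ (le_trans (hprle j i₀ hjS hi₀S) hρ)
        · rcases hpr (i₀, j) hi₀S hjS hgt with h | h
          · exact h ρ (le_trans (hprle i₀ j hi₀S hjS) hρ)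
          · exact absurd (hi₀max j hjS)
              (not_le.mpr (h ρC (hprle i₀ j hi₀S hjS)))
      obtain ⟨hi₀1, hi₀n, -⟩ := hmemS i₀ hi₀S
      -- Taylor expansion
      have taylor_eval : ∀ x y : K, T.eval y =
          ∑ i ∈ Finset.range (n+1), (hasseDeriv i T).eval x * (y - x) ^ i := by
        intro x y
        have h1 : T.eval y = (taylor x T).eval (y - x) := by
          rw [taylor_apply, eval_comp]
          simp
        rw [h1, eval_eq_sum_range' (n := n+1) (by rw [natDegree_taylor, hdeg]; omega)]
        exact Finset.sum_congr rfl fun i _ => by rw [taylor_coeff]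
      have expand : ∀ ρ σ, ρ < σ → T.eval (aseq σ) = T.eval (aseq ρ) +
          ∑ i ∈ S, (hasseDeriv i T).eval (aseq ρ) * (aseq σ - aseq ρ) ^ i := by
        intro ρ σ hρσ
        rw [taylor_eval (aseq ρ) (aseq σ)]
        have hsub : insert 0 S ⊆ Finset.range (n+1) := by
          intro i hi
          rcases Finset.mem_insert.mp hi with rfl | hi
          · exact Finset.mem_range.mpr (by omega)
          · exact (Finset.mem_filter.mp hi).1
        have hvan : ∀ i ∈ Finset.range (n+1), i ∉ insert 0 S →
            (hasseDeriv i T).eval (aseq ρ) * (aseq σ - aseq ρ) ^ i = 0 := by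
          intro i hir hiS
          have hzero : hasseDeriv i T = 0 := by
            by_contra hne
            rcases Nat.eq_zero_or_pos i with rfl | hi1
            · exact hiS (Finset.mem_insert_self 0 S)
            · exact hiS (Finset.mem_insert_of_mem
                (Finset.mem_filter.mpr ⟨hir, hi1, hne⟩))
          rw [hzero, eval_zero, zero_mul]
        rw [← Finset.sum_subset hsub hvan, Finset.sum_insert (by simp [hSdef])]
        congr 1
        rw [hasseDeriv_zero', pow_zero, mul_one]
      -- value of summands and of the sum
      have hterm : ∀ ρ σ, ρC ≤ ρ → ρ < σ → ∀ i ∈ S,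
          v ((hasseDeriv i T).eval (aseq ρ) * (aseq σ - aseq ρ) ^ i) = c i * γ ρ ^ i := by
        intro ρ σ hρ hρσ i hiS
        rw [v.map_mul, v.map_pow, hγeq ρ σ hρσ, (hcS i hiS).2 ρ (le_trans hρCA hρ)]
      have hsumval : ∀ ρ σ, ρC ≤ ρ → ρ < σ →
          v (∑ i ∈ S, (hasseDeriv i T).eval (aseq ρ) * (aseq σ - aseq ρ) ^ i)
            = c i₀ * γ ρ ^ i₀ := by
        intro ρ σ hρ hρσ
        have h1 : ∀ j ∈ S, j ≠ i₀ →
            v ((hasseDeriv j T).eval (aseq ρ) * (aseq σ - aseq ρ) ^ j) <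
            v ((hasseDeriv i₀ T).eval (aseq ρ) * (aseq σ - aseq ρ) ^ i₀) := by
          intro j hj hne
          rw [hterm ρ σ hρ hρσ j hj, hterm ρ σ hρ hρσ i₀ hi₀S]
          exact hdom ρ hρ j hj hne
        rw [val_sum_dom v S _ hi₀S h1, hterm ρ σ hρ hρσ i₀ hi₀S]
      -- dichotomy
      by_cases hgood : ∃ ρ₁, ρC ≤ ρ₁ ∧ v (T.eval (aseq ρ₁)) ≠ c i₀ * γ ρ₁ ^ i₀
      · obtain ⟨ρ₁, hρ₁C, hρ₁⟩ := hgood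
        have h2 : c i₀ * γ ρ₁ ^ i₀ ≠ 0 := mul_ne_zero (hcS i₀ hi₀S).1 (pow_ne_zero _ (hγ0 ρ₁))
        refine ⟨max (v (T.eval (aseq ρ₁))) (c i₀ * γ ρ₁ ^ i₀), ?_, ?_⟩
        · intro h0
          exact h2 (le_antisymm (le_trans (le_max_right _ _) h0.le) zero_le')
        · obtain ⟨ρ₂, hρ₂⟩ := exists_gt ρ₁
          refine ⟨ρ₂, fun σ hσ => ?_⟩
          have hσ1 : ρ₁ < σ := lt_of_lt_of_le hρ₂ hσ
          rw [expand ρ₁ σ hσ1, v.map_add_of_distinct_val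
            (by rw [hsumval ρ₁ σ hρ₁C hσ1]; exact hρ₁), hsumval ρ₁ σ hρ₁C hσ1]
      · push_neg at hgood
        exfalso
        rcases Nat.lt_or_ge n 2 with hn2 | hn2
        · -- n = 1 : T has a root z in K which is a pseudo-limit; contradict hcof
          have hn1' : n = 1 := by omega
          subst hn1'
          have hi₀' : i₀ = 1 := by omega
          subst hi₀'
          have ht1ne : T.coeff 1 ≠ 0 := hTn
          set z : K := -(T.coeff 0) / T.coeff 1 with hz
          have hTeval : ∀ x : K, T.eval x = T.coeff 1 * (x - z) := by
            intro x
            conv_lhs => rw [eq_X_add_C_of_natDegree_le_one (by omega : T.natDegree ≤ 1)]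
            rw [hz]
            field_simp
            simp only [eval_add, eval_mul, eval_C, eval_X]
            ring
          have hc1 : c 1 = v (T.coeff 1) := by
            have h1 := (hcS 1 hi₀S).2 ρC hρCA
            have h2 : hasseDeriv 1 T = C (T.coeff 1) := by
              rw [hasseDeriv_one']
              conv_lhs => rw [eq_X_add_C_of_natDegree_le_one (by omega : T.natDegree ≤ 1)]
              simp
            rw [h2, eval_C] at h1
            exact h1.symm
          have hzγ : ∀ ρ, ρC ≤ ρ → v (aseq ρ - z) = γ ρ := by
            intro ρ hρ
            have h1 := hgood ρ hρ
            rw [hTeval, v.map_mul, hc1, pow_one] at h1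
            exact mul_left_cancel₀ (v.ne_zero_iff.mpr ht1ne) h1
          obtain ⟨ρ', hρ'⟩ := hcof z
          obtain ⟨σ, hσ⟩ := exists_gt (max ρC ρ')
          have hσC : ρC ≤ σ := le_of_lt (lt_of_le_of_lt (le_max_left _ _) hσ)
          have hσρ' : ρ' < σ := lt_of_le_of_lt (le_max_right _ _) hσ
          have hzb : z ^ p - z - b
              = ((z - aseq σ) ^ p - (z - aseq σ)) + (aseq σ ^ p - aseq σ - b) := by
            rw [sub_pow_char]
            ring
          have hvz : v (z - aseq σ) = γ σ := by
            rw [Valuation.map_sub_swap]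
            exact hzγ σ hσC
          have hlt2 : v (z - aseq σ) < v ((z - aseq σ) ^ p) := by
            rw [v.map_pow, hvz]
            calc γ σ = γ σ ^ 1 := (pow_one _).symm
              _ < γ σ ^ p := pow_lt_pow_right₀ (hγ1 σ) hp.one_lt
          have hv1 : v ((z - aseq σ) ^ p - (z - aseq σ)) = δ σ := by
            rw [val_sub_of_lt v hlt2, v.map_pow, hvz, hγp]
          have hfin : v (z ^ p - z - b) ≤ δ σ := by
            rw [hzb]
            refine le_trans (v.map_add _ _) ?_
            rw [hv1, hδ_eval σ]
            exact max_le le_rfl le_rfl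
          exact absurd (le_trans hρ' hfin) (not_le.mpr (hδanti hσρ'))
        · -- n ≥ 2 : expand X^p - X - b in base Q and contradict primality of p
          set lc := T.leadingCoeff with hlc
          have hlcne : lc ≠ 0 := leadingCoeff_ne_zero.mpr hT
          have hvlc : v lc ≠ 0 := v.ne_zero_iff.mpr hlcne
          set Q : K[X] := T * C lc⁻¹ with hQdef
          have hQmonic : Q.Monic := monic_mul_leadingCoeff_inv hT
          have hQdeg : Q.natDegree = n := by
            rw [hQdef, natDegree_mul_leadingCoeff_inv _ hT, hdeg]
          set cQ : Γ := c i₀ * (v lc)⁻¹ with hcQ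
          have hcQ0 : cQ ≠ 0 := mul_ne_zero (hcS i₀ hi₀S).1 (inv_ne_zero hvlc)
          have hQshape : ∀ ρ, ρC ≤ ρ → v (Q.eval (aseq ρ)) = cQ * γ ρ ^ i₀ := by
            intro ρ hρ
            rw [hQdef, eval_mul, eval_C, v.map_mul, hgood ρ hρ, map_inv₀, hcQ]
            exact mul_right_comm _ _ _
          -- base-Q expansion, by strong induction on the degree
          have G : ∀ d : ℕ, ∀ W : K[X], W ≠ 0 → W.natDegree = d →
              ∃ (t : ℕ) (κ : Γ) (ρ₁ : ι), κ ≠ 0 ∧ t * n ≤ d ∧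
                ∀ ρ, ρ₁ ≤ ρ → v (W.eval (aseq ρ)) = κ * γ ρ ^ (t * i₀) := by
            intro d
            induction d using Nat.strong_induction_on with
            | _ d IHd =>
              intro W hW hdW
              by_cases hsmall : W.natDegree < n
              · obtain ⟨κ, hκ0, ρ₁, h⟩ :=
                  IH W.natDegree hsmall (lt_trans hsmall hn) W hW le_rfl
                refine ⟨0, κ, ρ₁, hκ0, by omega, fun ρ hρ => ?_⟩
                rw [h ρ hρ]
                simp
              · push_neg at hsmall
                set R := W %ₘ Q with hR
                set D := W /ₘ Q with hD
                have hWeq : R + Q * D = W := modByMonic_add_div W Q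
                have hDne : D ≠ 0 := by
                  intro h0
                  rw [h0, mul_zero, add_zero] at hWeq
                  have hdr : W.degree < Q.degree := hWeq ▸ degree_modByMonic_lt W hQmonic
                  have h1 := natDegree_lt_natDegree hW hdr
                  omega
                have hdD : D.natDegree = d - n := by
                  rw [hD, natDegree_divByMonic W hQmonic, hdW, hQdeg]
                have hsmall' : n ≤ d := by omega
                obtain ⟨tD, κD, ρD, hκD0, htD, hshD⟩ :=
                  IHd (d - n) (by omega) D hDne hdD
                have hbound : (tD + 1) * n ≤ d := by
                  have h1 : tD * n + n ≤ (d - n) + n := Nat.add_le_add_right htD n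
                  rw [Nat.sub_add_cancel hsmall'] at h1
                  calc (tD + 1) * n = tD * n + n := by ring
                    _ ≤ d := h1
                have hQD : ∀ ρ, ρC ≤ ρ → ρD ≤ ρ →
                    v ((Q * D).eval (aseq ρ)) = (cQ * κD) * γ ρ ^ ((tD + 1) * i₀) := by
                  intro ρ h1 h2
                  rw [eval_mul, v.map_mul, hQshape ρ h1, hshD ρ h2,
                    show (tD + 1) * i₀ = i₀ + tD * i₀ by ring, pow_add]
                  exact mul_mul_mul_comm _ _ _ _
                by_cases hR0 : R = 0
                · refine ⟨tD + 1, cQ * κD, max ρC ρD, mul_ne_zero hcQ0 hκD0, hbound,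
                    fun ρ hρ => ?_⟩
                  rw [← hWeq, hR0, zero_add]
                  exact hQD ρ (le_trans (le_max_left _ _) hρ) (le_trans (le_max_right _ _) hρ)
                · have hdR : R.natDegree < n := by
                    have h1 := natDegree_lt_natDegree hR0 (degree_modByMonic_lt W hQmonic)
                    omega
                  obtain ⟨κR, hκR0, ρR, hshR⟩ :=
                    IH R.natDegree hdR (lt_trans hdR hn) R hR0 le_rfl
                  have he1 : (tD + 1) * i₀ ≠ 0 := by positivity
                  by_cases hcmp : ∃ ρh, ρC ≤ ρh ∧ ρD ≤ ρh ∧ ρR ≤ ρh ∧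
                      (cQ * κD) * γ ρh ^ ((tD + 1) * i₀) ≤ κR
                  · obtain ⟨ρh, h1, h2, h3, h4⟩ := hcmp
                    obtain ⟨ρ₂, hρ₂⟩ := exists_gt ρh
                    refine ⟨0, κR, ρ₂, hκR0, by omega, fun ρ hρ => ?_⟩
                    have hρh : ρh < ρ := lt_of_lt_of_le hρ₂ hρ
                    have hlt3 : (cQ * κD) * γ ρ ^ ((tD + 1) * i₀) < κR := by
                      refine lt_of_lt_of_le ?_ h4
                      exact mul_lt_mul_of_pos_left
                        (pow_lt_pow_left₀ (hγanti hρh) zero_le' he1)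
                        (zero_lt_iff.mpr (mul_ne_zero hcQ0 hκD0))
                    have hv2 : v ((Q * D).eval (aseq ρ)) < v (R.eval (aseq ρ)) := by
                      rw [hQD ρ (le_trans h1 (le_of_lt hρh)) (le_trans h2 (le_of_lt hρh)),
                        hshR ρ (le_trans h3 (le_of_lt hρh))]
                      exact hlt3
                    rw [← hWeq, eval_add, val_add_of_lt v hv2,
                      hshR ρ (le_trans h3 (le_of_lt hρh))]
                    simp
                  · push_neg at hcmp
                    refine ⟨tD + 1, cQ * κD, max ρC (max ρD ρR),
                      mul_ne_zero hcQ0 hκD0, hbound, fun ρ hρ => ?_⟩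
                    have hρ1 : ρC ≤ ρ := le_trans (le_max_left _ _) hρ
                    have hρ2 : ρD ≤ ρ :=
                      le_trans (le_trans (le_max_left _ _) (le_max_right _ _)) hρ
                    have hρ3 : ρR ≤ ρ :=
                      le_trans (le_trans (le_max_right _ _) (le_max_right _ _)) hρ
                    have h4 := hcmp ρ hρ1 hρ2 hρ3
                    have hv2 : v (R.eval (aseq ρ)) < v ((Q * D).eval (aseq ρ)) := by
                      rw [hQD ρ hρ1 hρ2, hshR ρ hρ3]
                      exact h4
                    rw [← hWeq, eval_add, add_comm (R.eval (aseq ρ)),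
                      val_add_of_lt v hv2]
                    exact hQD ρ hρ1 hρ2
          -- apply G to P = X^p - X - C b
          have hPdeg' : (X ^ p - X - C b : K[X]).natDegree = p := by
            rw [sub_sub, natDegree_sub_eq_left_of_natDegree_lt, natDegree_X_pow]
            rw [natDegree_X_pow, natDegree_X_add_C]
            exact hp.one_lt
          have hPne : (X ^ p - X - C b : K[X]) ≠ 0 := by
            intro h0
            rw [h0, natDegree_zero] at hPdeg'
            exact absurd hPdeg'.symm hp.ne_zero
          have hPeval : ∀ x : K, (X ^ p - X - C b : K[X]).eval x = x ^ p - x - b := by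
            intro x
            simp
          obtain ⟨t, κ, ρ₁, hκ0, htn, hsh⟩ := G p (X ^ p - X - C b) hPne hPdeg'
          obtain ⟨σ', hσ'⟩ := exists_gt ρ₁
          have hE : ∀ ρ, ρ₁ ≤ ρ → γ ρ ^ p = κ * γ ρ ^ (t * i₀) := by
            intro ρ hρ
            have h1 := hsh ρ hρ
            rw [hPeval, hδ_eval ρ] at h1
            rw [hγp ρ]
            exact h1
          set m := t * i₀ with hm
          rcases Nat.lt_trichotomy m p with hmp | hmp | hmp
          · -- m < p
            have hx : ∀ ρ, ρ₁ ≤ ρ → γ ρ ^ (p - m) = κ := by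
              intro ρ hρ
              have h2 : γ ρ ^ (p - m) * γ ρ ^ m = κ * γ ρ ^ m := by
                rw [← pow_add, show p - m + m = p by omega]
                exact hE ρ hρ
              exact mul_right_cancel₀ (pow_ne_zero _ (hγ0 ρ)) h2
            have h3 : γ ρ₁ = γ σ' :=
              pow_left_inj₀' (by omega : p - m ≠ 0)
                (by rw [hx ρ₁ le_rfl, hx σ' (le_of_lt hσ')])
            exact absurd h3 (ne_of_gt (hγanti hσ'))
          · -- m = p : t * i₀ = p with i₀ ≤ n < p forces i₀ = 1, t = p, so p*n ≤ p
            have hdvd : i₀ ∣ p := ⟨t, by rw [← hmp, hm, Nat.mul_comm]⟩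
            rcases hp.eq_one_or_self_of_dvd i₀ hdvd with h1 | h1
            · have ht : t = p := by
                rw [h1, mul_one] at hm
                omega
              rw [ht] at htn
              have h5 : p * n ≤ p * 1 := by rw [mul_one]; exact htn
              have h6 : n ≤ 1 := Nat.le_of_mul_le_mul_left h5 hp.pos
              omega
            · omega
          · -- p < m
            have hx : ∀ ρ, ρ₁ ≤ ρ → κ * γ ρ ^ (m - p) = 1 := by
              intro ρ hρ
              have h2 : (κ * γ ρ ^ (m - p)) * γ ρ ^ p = 1 * γ ρ ^ p := by
                rw [mul_assoc, ← pow_add, show m - p + p = m by omega, one_mul]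
                exact (hE ρ hρ).symm
              exact mul_right_cancel₀ (pow_ne_zero _ (hγ0 ρ)) h2
            have h3 : γ ρ₁ ^ (m - p) = γ σ' ^ (m - p) :=
              mul_left_cancel₀ hκ0
                (by rw [hx ρ₁ le_rfl, hx σ' (le_of_lt hσ')])
            have h4 : γ ρ₁ = γ σ' := pow_left_inj₀' (by omega) h3
            exact absurd h4 (ne_of_gt (hγanti hσ'))
  -- conclude
  obtain ⟨κ, hκ0, ρ₁, h⟩ := MAIN P₀.natDegree hcon P₀ hP₀ne le_rfl
  obtain ⟨σ, hσ⟩ := exists_gt (max ρ₀ ρ₁)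
  have h1 := hρ₀ (max ρ₀ ρ₁) σ (le_max_left _ _) hσ
  rw [h (max ρ₀ ρ₁) (le_max_right _ _),
    h σ (le_of_lt (lt_of_le_of_lt (le_max_right _ _) hσ))] at h1
  exact lt_irrefl _ h1
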